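/- arXiv:2010.00217 — 2 statements merged into one kernel-verified Lean document; each statement's English description precedes it below -/
import Mathlib

section
/- In the collaborative decoding protocol, if every symbol of the coded Merkle tree is covered by at least one honest participant and every selective broadcast reaches the entire network, then collaborative peeling decoding decodes exactly the same set of symbols as centralized peeling decoding; in particular, if no stopping set of the LDPC code is hidden, collaborative decoding recovers all symbols. -/
/-- Centralized peeling decoding: a symbol is decoded if it is initially
known, or if some parity check containing it has all of its other symbols
decoded. -/
inductive CentralDecoded {S C : Type*} (adj : C → Finset S) (K0 : Set S) : S → Prop
  | base {s : S} : s ∈ K0 → CentralDecoded adj K0 s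
  | peel {s : S} (c : C) : s ∈ adj c →
      (∀ t ∈ adj c, t ≠ s → CentralDecoded adj K0 t) → CentralDecoded adj K0 s

/-- Collaborative peeling decoding: additionally, a symbol can only be peeled
by an honest participant in charge of it (the other symbols of the parity
having been broadcast). -/
inductive CollabDecoded {S C P : Type*} (adj : C → Finset S) (K0 : Set S)
    (assign : S → Set P) (honest : Set P) : S → Prop
  | base {s : S} : s ∈ K0 → CollabDecoded adj K0 assign honest s
  | peel {s : S} (c : C) : (∃ p ∈ assign s, p ∈ honest) → s ∈ adj c →
      (∀ t ∈ adj c, t ≠ s → CollabDecoded adj K0 assign honest t) →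
      CollabDecoded adj K0 assign honest s

/-- A stopping set: a nonempty set of symbols such that every parity check
touching it touches it in at least two symbols. -/
def IsStoppingSet {S C : Type*} [DecidableEq S] (adj : C → Finset S)
    (T : Finset S) : Prop :=
  T.Nonempty ∧ ∀ c : C, (adj c ∩ T).Nonempty → 2 ≤ (adj c ∩ T).card

/-- If every symbol is covered by at least one honest participant (and every
broadcast reaches everyone, as modeled by the shared decoded sets), then
collaborative peeling decodes exactly the same symbols as centralized
peeling; in particular, if no stopping set is hidden, collaborative decoding
recovers all symbols. -/
theorem collab_decoding_equals_central {S C P : Type*} [Fintype S] [Fintype C] [DecidableEq S]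
    (adj : C → Finset S) (K0 : Set S) (assign : S → Set P) (honest : Set P)
    (hcover : ∀ s : S, ∃ p ∈ assign s, p ∈ honest) :
    (∀ s : S, CollabDecoded adj K0 assign honest s ↔ CentralDecoded adj K0 s) ∧
    ((¬ ∃ T : Finset S, (∀ s ∈ T, s ∉ K0) ∧ IsStoppingSet adj T) →
      ∀ s : S, CollabDecoded adj K0 assign honest s) := by
  classical
  have hiff : ∀ s : S, CollabDecoded adj K0 assign honest s ↔ CentralDecoded adj K0 s := by
    intro s
    constructor
    · intro h
      induction h with
      | base h => exact CentralDecoded.base h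
      | peel c _ hs _ ih => exact CentralDecoded.peel c hs ih
    · intro h
      induction h with
      | base h => exact CollabDecoded.base h
      | peel c hs _ ih => exact CollabDecoded.peel c (hcover _) hs ih
  refine ⟨hiff, fun hns s => ?_⟩
  rw [hiff]
  by_contra hnd
  apply hns
  refine ⟨Finset.univ.filter (fun t => ¬ CentralDecoded adj K0 t), ?_, ?_, ?_⟩
  · intro t ht hK
    exact (Finset.mem_filter.mp ht).2 (CentralDecoded.base hK)
  · exact ⟨s, Finset.mem_filter.mpr ⟨Finset.mem_univ s, hnd⟩⟩
  · intro c hc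
    obtain ⟨t, ht⟩ := hc
    rw [Finset.mem_inter, Finset.mem_filter] at ht
    by_contra hlt
    push_neg at hlt
    interval_cases h : (adj c ∩ Finset.univ.filter (fun t => ¬ CentralDecoded adj K0 t)).card
    · simp [Finset.card_eq_zero] at h
      have hmem : t ∈ adj c ∩ Finset.univ.filter (fun t => ¬ CentralDecoded adj K0 t) := Finset.mem_inter.mpr ⟨ht.1, Finset.mem_filter.mpr ht.2⟩
      rw [h] at hmem; exact absurd hmem (Finset.notMem_empty t)
    · obtain ⟨u, hu⟩ := Finset.card_eq_one.mp h
      have htu : t = u := by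
        have hmem : t ∈ adj c ∩ Finset.univ.filter (fun t => ¬ CentralDecoded adj K0 t) := Finset.mem_inter.mpr ⟨ht.1, Finset.mem_filter.mpr ht.2⟩
        rw [hu] at hmem; exact Finset.mem_singleton.mp hmem
      subst htu
      apply ht.2.2
      refine CentralDecoded.peel c ht.1 ?_
      intro u hu' hne
      by_contra hund
      have : u ∈ ({t} : Finset S) := by
        rw [← hu]; exact Finset.mem_inter.mpr ⟨hu', Finset.mem_filter.mpr ⟨Finset.mem_univ u, hund⟩⟩
      exact hne (Finset.mem_singleton.mp this)
end

section
/- Conversely, if the set of erased symbols contains a nonempty stopping set, then peeling decoding fails: the symbols in a maximal stopping set contained in the erased set are never recovered. -/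
/-- Peeling decoding: a symbol is decoded if it is initially known (not
erased), or if some parity check containing it has all of its other symbols
decoded. -/
inductive PeelDecoded {S C : Type*} (adj : C → Finset S) (known : Set S) : S → Prop
  | base {s : S} : s ∈ known → PeelDecoded adj known s
  | peel {s : S} (c : C) : s ∈ adj c →
      (∀ t ∈ adj c, t ≠ s → PeelDecoded adj known t) → PeelDecoded adj known s

/-- If the erased set contains a stopping set `T`, then peeling decoding
fails: no symbol of `T` is ever recovered, regardless of the order in which
degree-one checks are processed. -/
theorem peeling_fails_of_stopping_set {S C : Type*} [DecidableEq S]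
    (adj : C → Finset S) (erased : Finset S) (T : Finset S)
    (hT : T ⊆ erased) (hstop : IsStoppingSet adj T) :
    ∀ s ∈ T, ¬ PeelDecoded adj (fun s => s ∉ erased) s := by
  intro s hs hdec
  induction hdec with
  | base h => exact h (hT hs)
  | @peel s c hsc hall ih =>
    have hne : (adj c ∩ T).Nonempty := ⟨s, Finset.mem_inter.mpr ⟨hsc, hs⟩⟩
    have hcard := hstop.2 c hne
    obtain ⟨t, ht, hts⟩ := Finset.exists_mem_ne hcard s
    rw [Finset.mem_inter] at ht
    exact ih t ht.1 hts ht.2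
end
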